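/- arXiv:math/0609051 — 2 statements merged into one kernel-verified Lean document; each statement's English description precedes it below -/
import Mathlib

section
/- Eulerian formula for gain interval [1,b−1]. For all integers n ≥ 2, b ≥ 1, and m ≥ 0: N_{[1, b−1]}(n,m) = ∑_{r=0}^{n−1} A(n, r+1) · C(m + n − 1 − b·r, n). This counts the integer points of [1,m]^n lying on none of the hyperplanes x_j = x_i + g (1 ≤ i < j ≤ n, 1 ≤ g ≤ b−1). -/
open Finset

/-- `latticeCount a b n m` is `N_{[a,b]}(n,m)`: the number of maps `x : {1, …, n} → ℤ` with
`1 ≤ x i ≤ m` for all `i` and `x j ≠ x i + g` for all `i < j` and all gains `g` with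
`a ≤ g ≤ b`.  Equivalently, the number of integer points of the cube `[1, m]^n` lying on none
of the affinographic hyperplanes `x j = x i + g` (`i < j`, `a ≤ g ≤ b`). -/
noncomputable def latticeCount (a b : ℤ) (n : ℕ) (m : ℤ) : ℕ :=
  Nat.card {x : Fin n → ℤ // (∀ v, 1 ≤ x v ∧ x v ≤ m) ∧
    ∀ i j : Fin n, i < j → ∀ g : ℤ, a ≤ g → g ≤ b → x j ≠ x i + g}

/-- `eulerianNumber n r` is the Eulerian number `A(n, r + 1)`: the number of permutations `σ`
of `{1, …, n}` with exactly `r` ascents, an ascent being an index `1 ≤ i ≤ n − 1` with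
`σ(i) < σ(i+1)`. -/
noncomputable def eulerianNumber (n r : ℕ) : ℕ :=
  Nat.card {σ : Equiv.Perm (Fin n) //
    Nat.card {i : ℕ // ∃ h1 : i + 1 < n,
      σ ⟨i, Nat.lt_of_succ_lt h1⟩ < σ ⟨i + 1, h1⟩} = r}

/-- The binomial coefficient `C(t, n)` for an integer `t`, interpreted as `0` when `t < n`
(in particular when `t < 0`). -/
def intChoose (t : ℤ) (n : ℕ) : ℕ := t.toNat.choose n


section EulerianAux
variable {n : ℕ} (b m : ℤ)

/-- Ascent predicate at position `i` (ℕ-indexed). -/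
def pAsc (σ : Equiv.Perm (Fin n)) (i : ℕ) : Prop :=
  ∃ h1 : i + 1 < n, σ ⟨i, Nat.lt_of_succ_lt h1⟩ < σ ⟨i + 1, h1⟩

instance (σ : Equiv.Perm (Fin n)) : DecidablePred (pAsc σ) := fun _ =>
  exists_prop_decidable _

/-- Number of ascents among positions `< k`. -/
def ascCount (σ : Equiv.Perm (Fin n)) (k : ℕ) : ℕ :=
  ((Finset.range k).filter (pAsc σ)).card

def okX (x : Fin n → ℤ) : Prop :=
  (∀ v, 1 ≤ x v ∧ x v ≤ m) ∧
    ∀ i j : Fin n, i < j → (x j ≤ x i ∨ x i + b ≤ x j)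

def okY (σ : Equiv.Perm (Fin n)) (y : Fin n → ℤ) : Prop :=
  (∀ v, 1 ≤ y v ∧ y v ≤ m) ∧
    ∀ i : ℕ, ∀ hi : i + 1 < n,
      y ⟨i, Nat.lt_of_succ_lt hi⟩ +
        (if σ ⟨i, Nat.lt_of_succ_lt hi⟩ < σ ⟨i + 1, hi⟩ then b else 0) ≤ y ⟨i + 1, hi⟩

theorem monotone_of_step {α : Type*} [Preorder α] {y : Fin n → α}
    (h : ∀ i : ℕ, ∀ hi : i + 1 < n, y ⟨i, Nat.lt_of_succ_lt hi⟩ ≤ y ⟨i + 1, hi⟩) :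
    Monotone y := by
  have key : ∀ d k, ∀ hk : k + d < n, y ⟨k, by omega⟩ ≤ y ⟨k + d, hk⟩ := by
    intro d
    induction d with
    | zero => intro k hk; exact le_refl _
    | succ d ih =>
      intro k hk
      exact (ih k (by omega)).trans (h (k + d) (by omega))
  intro a c hac
  have h1 : (a : ℕ) + ((c : ℕ) - (a : ℕ)) < n := by omega
  have e2 : c = ⟨(a : ℕ) + ((c : ℕ) - (a : ℕ)), h1⟩ := Fin.ext (by simp; omega)
  rw [e2]
  exact key ((c : ℕ) - (a : ℕ)) (a : ℕ) h1

theorem gap_of_okY (hb : 1 ≤ b) {σ : Equiv.Perm (Fin n)} {y : Fin n → ℤ}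
    (hy : okY b m σ y) :
    ∀ l k : ℕ, ∀ hl : l < n, ∀ hk : k < n, k < l →
      σ ⟨k, hk⟩ < σ ⟨l, hl⟩ → y ⟨k, hk⟩ + b ≤ y ⟨l, hl⟩ := by
  have hmono : Monotone y := monotone_of_step (fun i hi => by
    have := hy.2 i hi
    split_ifs at this with hcmp <;> omega)
  intro l
  induction l with
  | zero => omega
  | succ l ih =>
    intro k hl hk hkl hσ
    by_cases hasc : σ ⟨l, by omega⟩ < σ ⟨l + 1, hl⟩
    · have hstep := hy.2 l hl
      rw [if_pos hasc] at hstep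
      have hmle : y ⟨k, hk⟩ ≤ y ⟨l, by omega⟩ := hmono (by simp [Fin.le_def]; omega)
      omega
    · push_neg at hasc
      have hne : σ ⟨l + 1, hl⟩ ≠ σ ⟨l, by omega⟩ := by
        intro h
        have h2 : (⟨l + 1, hl⟩ : Fin n) = ⟨l, by omega⟩ := σ.injective h
        have h3 := Fin.ext_iff.mp h2
        simp only [] at h3
        omega
      have hlt : σ ⟨l + 1, hl⟩ < σ ⟨l, by omega⟩ := lt_of_le_of_ne hasc hne
      have hkl' : k < l := by
        rcases Nat.lt_or_ge k l with h | h
        · exact h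
        · exfalso
          have : k = l := by omega
          subst this
          exact absurd (hσ.trans hlt) (lt_irrefl _)
      have := ih k (by omega) hk hkl' (hσ.trans hlt)
      have hstep := hy.2 l hl
      split_ifs at hstep <;> omega


def fLex (x : Fin n → ℤ) : Fin n → Lex (ℤ × (Fin n)ᵒᵈ) :=
  fun i => toLex (x i, OrderDual.toDual i)

theorem fLex_inj (x : Fin n → ℤ) : Function.Injective (fLex x) := by
  intro i j h
  have := congrArg (fun p => (ofLex p).2) h
  simpa [fLex] using this

theorem okY_monotone (hb : 1 ≤ b) {σ : Equiv.Perm (Fin n)} {y : Fin n → ℤ}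
    (hy : okY b m σ y) : Monotone y :=
  monotone_of_step (fun i hi => by
    have := hy.2 i hi
    split_ifs at this with hcmp <;> omega)

theorem eq_sort (hb : 1 ≤ b) {σ : Equiv.Perm (Fin n)} {y : Fin n → ℤ}
    (hy : okY b m σ y) : σ = Tuple.sort (fLex (y ∘ σ.symm)) := by
  rw [Tuple.eq_sort_iff]
  refine ⟨?_, fun i j hij hf => absurd (fLex_inj _ hf) (σ.injective.ne hij.ne)⟩
  apply monotone_of_step
  intro i hi
  have key : ∀ k : Fin n, fLex (y ∘ σ.symm) (σ k) = toLex (y k, OrderDual.toDual (σ k)) := by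
    intro k; simp [fLex]
  simp only [Function.comp_apply, key]
  rw [Prod.Lex.le_iff]
  have hstep := hy.2 i hi
  by_cases hcmp : σ ⟨i, Nat.lt_of_succ_lt hi⟩ < σ ⟨i + 1, hi⟩
  · rw [if_pos hcmp] at hstep
    exact Or.inl (by simp only [ofLex_toLex]; omega)
  · rw [if_neg hcmp] at hstep
    rcases lt_or_eq_of_le (by omega : y ⟨i, Nat.lt_of_succ_lt hi⟩ ≤ y ⟨i + 1, hi⟩) with h | h
    · exact Or.inl h
    · exact Or.inr ⟨h, by simpa using le_of_not_gt hcmp⟩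

theorem okY_sort (hb : 1 ≤ b) {x : Fin n → ℤ} (hx : okX b m x) :
    okY b m (Tuple.sort (fLex x)) (x ∘ Tuple.sort (fLex x)) := by
  set τ := Tuple.sort (fLex x) with hτ
  refine ⟨fun v => hx.1 _, fun i hi => ?_⟩
  have hm := Tuple.monotone_sort (fLex x)
  have hle := hm (show (⟨i, Nat.lt_of_succ_lt hi⟩ : Fin n) ≤ ⟨i + 1, hi⟩ by
    simp [Fin.le_def])
  simp only [Function.comp_apply, fLex] at hle
  rw [Prod.Lex.le_iff] at hle
  simp only [Function.comp_apply]
  by_cases hcmp : τ ⟨i, Nat.lt_of_succ_lt hi⟩ < τ ⟨i + 1, hi⟩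
  · rw [if_pos hcmp]
    rcases hle with h | ⟨h1, h2⟩
    · rcases hx.2 _ _ hcmp with h' | h'
      · exfalso; exact absurd h (not_lt.mpr h')
      · exact by omega
    · exfalso
      have : τ ⟨i + 1, hi⟩ ≤ τ ⟨i, Nat.lt_of_succ_lt hi⟩ := by simpa [fLex] using h2
      exact absurd hcmp (not_lt.mpr this)
  · rw [if_neg hcmp]
    rcases hle with h | ⟨h1, h2⟩
    · simpa [fLex] using le_of_lt (by simpa [fLex] using h)
    · have h1' : x (τ ⟨i, Nat.lt_of_succ_lt hi⟩) = x (τ ⟨i + 1, hi⟩) := h1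
      omega

theorem okX_of_okY (hb : 1 ≤ b) {σ : Equiv.Perm (Fin n)} {y : Fin n → ℤ}
    (hy : okY b m σ y) : okX b m (y ∘ σ.symm) := by
  refine ⟨fun v => hy.1 _, fun i j hij => ?_⟩
  simp only [Function.comp_apply]
  set k := σ.symm i with hk
  set l := σ.symm j with hl
  have hσk : σ k = i := σ.apply_symm_apply i
  have hσl : σ l = j := σ.apply_symm_apply j
  rcases lt_trichotomy (l : ℕ) (k : ℕ) with h | h | h
  · exact Or.inl (okY_monotone b m hb hy (Fin.le_def.mpr (by omega)))
  · exfalso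
    have hkl2 : k = l := Fin.ext h.symm
    have : i = j := by rw [← hσk, hkl2, hσl]
    exact absurd this (ne_of_lt hij)
  · refine Or.inr ?_
    have := gap_of_okY b m hb hy (l : ℕ) (k : ℕ) l.isLt k.isLt h
      (by rw [Fin.eta, Fin.eta, hσk, hσl]; exact hij)
    rwa [Fin.eta, Fin.eta] at this


theorem ascCount_succ (σ : Equiv.Perm (Fin n)) (i : ℕ) :
    ascCount σ (i + 1) = ascCount σ i + (if pAsc σ i then 1 else 0) := by
  rw [ascCount, ascCount, Finset.range_add_one, Finset.filter_insert]
  split_ifs with h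
  · rw [Finset.card_insert_of_notMem (by simp)]
  · rfl

theorem ascCount_zero (σ : Equiv.Perm (Fin n)) : ascCount σ 0 = 0 := by
  simp [ascCount]

theorem pAsc_iff (σ : Equiv.Perm (Fin n)) (i : ℕ) (hi : i + 1 < n) :
    pAsc σ i ↔ σ ⟨i, Nat.lt_of_succ_lt hi⟩ < σ ⟨i + 1, hi⟩ :=
  ⟨fun ⟨_, h⟩ => h, fun h => ⟨hi, h⟩⟩

/-- the `w` transform -/
def wOf (σ : Equiv.Perm (Fin n)) (y : Fin n → ℤ) : Fin n → ℤ :=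
  fun k => y k + (k : ℤ) - b * ascCount σ (k : ℕ)

def yOf (σ : Equiv.Perm (Fin n)) (w : Fin n → ℤ) : Fin n → ℤ :=
  fun k => w k - (k : ℤ) + b * ascCount σ (k : ℕ)

theorem step_iff (σ : Equiv.Perm (Fin n)) (y : Fin n → ℤ) (i : ℕ) (hi : i + 1 < n) :
    (y ⟨i, Nat.lt_of_succ_lt hi⟩ +
        (if σ ⟨i, Nat.lt_of_succ_lt hi⟩ < σ ⟨i + 1, hi⟩ then b else 0) ≤ y ⟨i + 1, hi⟩) ↔
      wOf b σ y ⟨i, Nat.lt_of_succ_lt hi⟩ + 1 ≤ wOf b σ y ⟨i + 1, hi⟩ := by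
  simp only [wOf]
  rw [ascCount_succ]
  by_cases h : σ ⟨i, Nat.lt_of_succ_lt hi⟩ < σ ⟨i + 1, hi⟩
  · rw [if_pos h, if_pos ((pAsc_iff σ i hi).mpr h)]
    push_cast [mul_add, mul_one]
    constructor <;> intro <;> omega
  · rw [if_neg h, if_neg (fun hp => h ((pAsc_iff σ i hi).mp hp))]
    push_cast [mul_add, mul_zero, add_zero]
    constructor <;> intro <;> omega

theorem strictMono_of_step1 {w : Fin n → ℤ}
    (h : ∀ i : ℕ, ∀ hi : i + 1 < n, w ⟨i, Nat.lt_of_succ_lt hi⟩ + 1 ≤ w ⟨i + 1, hi⟩) :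
    StrictMono w := by
  have hm : Monotone (fun k : Fin n => w k - (k : ℤ)) :=
    monotone_of_step (fun i hi => by
      have := h i hi
      simp only []
      push_cast
      omega)
  intro a c hac
  have h1 := hm (le_of_lt hac)
  have h2 : (a : ℤ) < (c : ℤ) := by exact_mod_cast (Fin.lt_def.mp hac)
  simp only [] at h1
  omega

theorem okY_to_w (hb : 1 ≤ b) (hn : 0 < n) {σ : Equiv.Perm (Fin n)} {y : Fin n → ℤ}
    (hy : okY b m σ y) :
    StrictMono (wOf b σ y) ∧
      ∀ k, 1 ≤ wOf b σ y k ∧ wOf b σ y k ≤ m + n - 1 - b * ascCount σ (n - 1) := by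
  have hsm : StrictMono (wOf b σ y) :=
    strictMono_of_step1 (fun i hi => (step_iff b σ y i hi).mp (hy.2 i hi))
  refine ⟨hsm, fun k => ?_⟩
  have hfirst : wOf b σ y ⟨0, hn⟩ = y ⟨0, hn⟩ := by
    simp [wOf, ascCount_zero]
  have hlow : wOf b σ y ⟨0, hn⟩ ≤ wOf b σ y k :=
    hsm.monotone (by rw [Fin.le_def]; exact Nat.zero_le _)
  have hlast : k ≤ (⟨n - 1, by omega⟩ : Fin n) := by rw [Fin.le_def]; exact (by omega : (k : ℕ) ≤ n - 1)
  have hhigh : wOf b σ y k ≤ wOf b σ y ⟨n - 1, by omega⟩ := hsm.monotone hlast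
  have hend : wOf b σ y ⟨n - 1, by omega⟩ = y ⟨n - 1, by omega⟩ + ((n : ℤ) - 1) - b * ascCount σ (n - 1) := by
    simp only [wOf]
    have : ((⟨n - 1, by omega⟩ : Fin n) : ℕ) = n - 1 := rfl
    push_cast [Nat.cast_sub (show 1 ≤ n by omega)]
    ring
  have hb1 := hy.1 ⟨0, hn⟩
  have hb2 := hy.1 ⟨n - 1, by omega⟩
  constructor
  · omega
  · omega

theorem w_to_okY (hb : 1 ≤ b) (hn : 0 < n) {σ : Equiv.Perm (Fin n)} {w : Fin n → ℤ}
    (hw : StrictMono w ∧ ∀ k, 1 ≤ w k ∧ w k ≤ m + n - 1 - b * ascCount σ (n - 1)) :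
    okY b m σ (yOf b σ w) := by
  have hstep : ∀ i : ℕ, ∀ hi : i + 1 < n,
      yOf b σ w ⟨i, Nat.lt_of_succ_lt hi⟩ +
        (if σ ⟨i, Nat.lt_of_succ_lt hi⟩ < σ ⟨i + 1, hi⟩ then b else 0) ≤ yOf b σ w ⟨i + 1, hi⟩ := by
    intro i hi
    have hww : wOf b σ (yOf b σ w) = w := by
      funext k; simp [wOf, yOf]; ring
    rw [step_iff b σ _ i hi, hww]
    have := hw.1 (show (⟨i, Nat.lt_of_succ_lt hi⟩ : Fin n) < ⟨i + 1, hi⟩ from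
      Fin.mk_lt_mk.mpr (Nat.lt_succ_self i))
    omega
  refine ⟨fun v => ?_, hstep⟩
  have hmono : Monotone (yOf b σ w) := monotone_of_step (fun i hi => by
    have := hstep i hi
    split_ifs at this <;> omega)
  have hfirst : yOf b σ w ⟨0, hn⟩ = w ⟨0, hn⟩ := by simp [yOf, ascCount_zero]
  have hend : yOf b σ w ⟨n - 1, by omega⟩ =
      w ⟨n - 1, by omega⟩ - ((n : ℤ) - 1) + b * ascCount σ (n - 1) := by
    simp only [yOf]
    push_cast [Nat.cast_sub (show 1 ≤ n by omega)]
    ring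
  have h1 : yOf b σ w ⟨0, hn⟩ ≤ yOf b σ w v := hmono (by rw [Fin.le_def]; exact Nat.zero_le _)
  have h2 : yOf b σ w v ≤ yOf b σ w ⟨n - 1, by omega⟩ :=
    hmono (by rw [Fin.le_def]; exact (by omega : (v : ℕ) ≤ n - 1))
  have hw1 := hw.2 ⟨0, hn⟩
  have hw2 := hw.2 ⟨n - 1, by omega⟩
  constructor <;> omega


noncomputable def wEquiv (K : ℤ) :
    {w : Fin n → ℤ // StrictMono w ∧ ∀ k, 1 ≤ w k ∧ w k ≤ K} ≃
      {s : Finset ℤ // s ∈ (Finset.Icc (1 : ℤ) K).powersetCard n} where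
  toFun w := ⟨Finset.univ.image w.1, by
    rw [Finset.mem_powersetCard]
    refine ⟨fun a ha => ?_, ?_⟩
    · rw [Finset.mem_image] at ha
      obtain ⟨k, -, rfl⟩ := ha
      rw [Finset.mem_Icc]
      exact w.2.2 k
    · rw [Finset.card_image_of_injective _ w.2.1.injective, Finset.card_univ,
        Fintype.card_fin]⟩
  invFun s := ⟨fun k => (s.1.orderEmbOfFin (Finset.mem_powersetCard.mp s.2).2) k,
    (s.1.orderEmbOfFin _).strictMono, fun k => by
      have hmem := Finset.orderEmbOfFin_mem s.1 (Finset.mem_powersetCard.mp s.2).2 k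
      have := (Finset.mem_powersetCard.mp s.2).1 hmem
      rwa [Finset.mem_Icc] at this⟩
  left_inv w := by
    apply Subtype.ext
    exact (Finset.orderEmbOfFin_unique
      (by rw [Finset.card_image_of_injective _ w.2.1.injective, Finset.card_univ,
        Fintype.card_fin])
      (fun k => Finset.mem_image_of_mem _ (Finset.mem_univ k)) w.2.1).symm
  right_inv s := by
    apply Subtype.ext
    have hr := Finset.range_orderEmbOfFin s.1 (Finset.mem_powersetCard.mp s.2).2
    apply Finset.coe_injective
    rw [Finset.coe_image, Finset.coe_univ, Set.image_univ]
    exact hr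

theorem card_w (K : ℤ) :
    Nat.card {w : Fin n → ℤ // StrictMono w ∧ ∀ k, 1 ≤ w k ∧ w k ≤ K} =
      K.toNat.choose n := by
  rw [Nat.card_congr (wEquiv K), Nat.card_eq_finsetCard,
    Finset.card_powersetCard, Int.card_Icc]
  congr 1
  omega


noncomputable def bigEquiv (hb : 1 ≤ b) :
    (Σ σ : Equiv.Perm (Fin n), {y : Fin n → ℤ // okY b m σ y}) ≃
      {x : Fin n → ℤ // okX b m x} :=
  Equiv.ofBijective (fun p => ⟨p.2.1 ∘ p.1.symm, okX_of_okY b m hb p.2.2⟩) (by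
    constructor
    · rintro ⟨σ, y, hy⟩ ⟨σ', y', hy'⟩ h
      have hx : y ∘ σ.symm = y' ∘ σ'.symm := congrArg Subtype.val h
      have hσ : σ = σ' := by
        have e1 := eq_sort b m hb hy
        have e2 := eq_sort b m hb hy'
        rw [hx] at e1
        exact e1.trans e2.symm
      subst hσ
      have hy2 : y = y' := by
        funext k
        have := congrFun hx (σ k)
        simpa using this
      subst hy2
      rfl
    · rintro ⟨x, hx⟩
      refine ⟨⟨Tuple.sort (fLex x), ⟨x ∘ Tuple.sort (fLex x), okY_sort b m hb hx⟩⟩, ?_⟩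
      apply Subtype.ext
      funext v
      simp)

noncomputable def ywEquiv (hb : 1 ≤ b) (hn : 0 < n) (σ : Equiv.Perm (Fin n)) :
    {y : Fin n → ℤ // okY b m σ y} ≃
      {w : Fin n → ℤ // StrictMono w ∧
        ∀ k, 1 ≤ w k ∧ w k ≤ m + n - 1 - b * ascCount σ (n - 1)} where
  toFun y := ⟨wOf b σ y.1, okY_to_w b m hb hn y.2⟩
  invFun w := ⟨yOf b σ w.1, w_to_okY b m hb hn w.2⟩
  left_inv y := Subtype.ext (funext fun k => by simp only [wOf, yOf]; ring)
  right_inv w := Subtype.ext (funext fun k => by simp only [wOf, yOf]; ring)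

theorem eulerian_eq (j : ℕ) :
    eulerianNumber n j =
      (Finset.univ.filter
        (fun σ : Equiv.Perm (Fin n) => ascCount σ (n - 1) = j)).card := by
  have hinner : ∀ σ : Equiv.Perm (Fin n),
      Nat.card {i : ℕ // ∃ h1 : i + 1 < n,
        σ ⟨i, Nat.lt_of_succ_lt h1⟩ < σ ⟨i + 1, h1⟩} = ascCount σ (n - 1) := by
    intro σ
    show Nat.card {i : ℕ // pAsc σ i} = _
    have e : {i : ℕ // pAsc σ i} ≃
        {i : ℕ // i ∈ (Finset.range (n - 1)).filter (pAsc σ)} :=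
      Equiv.subtypeEquivRight (fun i => by
        rw [Finset.mem_filter, Finset.mem_range]
        exact ⟨fun h => ⟨by obtain ⟨h1, -⟩ := h; omega, h⟩, fun h => h.2⟩)
    rw [Nat.card_congr e, Nat.card_eq_finsetCard]
    rfl
  rw [eulerianNumber,
    Nat.card_congr (Equiv.subtypeEquivRight (fun σ => by rw [hinner σ])),
    Nat.card_congr (Equiv.subtypeEquivRight
      (fun σ : Equiv.Perm (Fin n) => (by
        rw [Finset.mem_filter]
        exact ⟨fun h => ⟨Finset.mem_univ σ, h⟩, fun h => h.2⟩ :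
        ascCount σ (n - 1) = j ↔ σ ∈ Finset.univ.filter
          (fun σ : Equiv.Perm (Fin n) => ascCount σ (n - 1) = j)))),
    Nat.card_eq_finsetCard]

theorem cond_iff (hb : 1 ≤ b) (x : Fin n → ℤ) :
    ((∀ v, 1 ≤ x v ∧ x v ≤ m) ∧
      ∀ i j : Fin n, i < j → ∀ g : ℤ, 1 ≤ g → g ≤ b - 1 → x j ≠ x i + g) ↔
    okX b m x := by
  constructor
  · rintro ⟨h1, h2⟩
    refine ⟨h1, fun i j hij => ?_⟩
    rcases le_or_gt (x j) (x i) with h | h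
    · exact Or.inl h
    rcases le_or_gt (x i + b) (x j) with h' | h'
    · exact Or.inr h'
    exact absurd (by ring : x j = x i + (x j - x i))
      (h2 i j hij (x j - x i) (by omega) (by omega))
  · rintro ⟨h1, h2⟩
    refine ⟨h1, fun i j hij g hg1 hg2 heq => ?_⟩
    rcases h2 i j hij with h | h <;> omega


end EulerianAux

/-- **Eulerian formula for gain interval `[1, b−1]`.**  For `n ≥ 2`, `b ≥ 1`, and `m ≥ 0`:
`N_{[1, b−1]}(n, m) = ∑_{r=0}^{n−1} A(n, r+1) C(m + n − 1 − b r, n)`.  This counts the integer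
points of `[1, m]^n` lying on none of the hyperplanes `x j = x i + g` (`1 ≤ i < j ≤ n`,
`1 ≤ g ≤ b − 1`). -/
theorem eulerian_formula_positive_gains (n : ℕ) (hn : 2 ≤ n) (b : ℤ) (hb : 1 ≤ b)
    (m : ℤ) (hm : 0 ≤ m) :
    latticeCount 1 (b - 1) n m =
      ∑ r ∈ Finset.range n, eulerianNumber n r * intChoose (m + n - 1 - b * r) n := by
  have hn0 : 0 < n := by omega
  rw [latticeCount]
  rw [Nat.card_congr (Equiv.subtypeEquivRight (cond_iff b m hb))]
  rw [Nat.card_congr (bigEquiv b m hb).symm]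
  rw [Nat.card_congr (Equiv.sigmaCongrRight (fun σ => ywEquiv b m hb hn0 σ))]
  rw [Nat.card_congr (Equiv.sigmaCongrRight
    (fun σ : Equiv.Perm (Fin n) => wEquiv (m + n - 1 - b * ascCount σ (n - 1))))]
  haveI : ∀ σ : Equiv.Perm (Fin n), Fintype {s : Finset ℤ //
      s ∈ (Finset.Icc (1 : ℤ) (m + n - 1 - b * ascCount σ (n - 1))).powersetCard n} :=
    fun σ => FinsetCoe.fintype _
  rw [Nat.card_eq_fintype_card, Fintype.card_sigma]
  have hterm : ∀ σ : Equiv.Perm (Fin n),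
      Fintype.card {s : Finset ℤ //
        s ∈ (Finset.Icc (1 : ℤ) (m + n - 1 - b * ascCount σ (n - 1))).powersetCard n} =
      intChoose (m + n - 1 - b * ascCount σ (n - 1)) n := by
    intro σ
    rw [Fintype.card_coe, Finset.card_powersetCard, Int.card_Icc, intChoose]
    congr 2
    omega
  rw [Finset.sum_congr rfl (fun σ _ => hterm σ)]
  have hmaps : ∀ σ ∈ (Finset.univ : Finset (Equiv.Perm (Fin n))),
      ascCount σ (n - 1) ∈ Finset.range n := by
    intro σ _
    rw [Finset.mem_range]
    calc ascCount σ (n - 1) ≤ (Finset.range (n - 1)).card := Finset.card_filter_le _ _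
    _ = n - 1 := Finset.card_range _
    _ < n := by omega
  rw [← Finset.sum_fiberwise_of_maps_to hmaps
    (fun σ => intChoose (m + n - 1 - b * ascCount σ (n - 1)) n)]
  refine Finset.sum_congr rfl (fun j hj => ?_)
  rw [eulerian_eq]
  have hsum : ∑ σ ∈ Finset.univ.filter
        (fun σ : Equiv.Perm (Fin n) => ascCount σ (n - 1) = j),
      intChoose (m + n - 1 - b * ascCount σ (n - 1)) n =
      ∑ _σ ∈ Finset.univ.filter
        (fun σ : Equiv.Perm (Fin n) => ascCount σ (n - 1) = j),
      intChoose (m + n - 1 - b * j) n :=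
    Finset.sum_congr rfl (fun σ hσ => by rw [(Finset.mem_filter.mp hσ).2])
  rw [hsum, Finset.sum_const, smul_eq_mul]
end

section
/- Integral zero of the odd-order counting polynomials. Let b ≥ 2 and k ≥ 0 be integers and set n = 2k + 1. Then ∑_{r=0}^{n−1} A(n, r+1) · ∏_{i=0}^{n−1} ( (b−1)k + n − 1 − b·r − i ) = 0 (an identity in ℤ). Equivalently, the degree-n polynomial p(M) = ∑_{r=0}^{n−1} A(n, r+1) · C(M + n − 1 − b·r, n), where C(x,n) := x(x−1)⋯(x−n+1)/n! is the generalized binomial coefficient, has the integral zero M = (b−1)k. (The case b = 2 is the polynomial giving the Linial lattice-point count for large M.) -/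
open Finset

open scoped Classical in
noncomputable def ascSet (n : ℕ) (σ : Equiv.Perm (Fin n)) : Finset ℕ :=
  (Finset.range (n - 1)).filter fun i =>
    ∃ h1 : i + 1 < n, σ ⟨i, Nat.lt_of_succ_lt h1⟩ < σ ⟨i + 1, h1⟩

lemma asc_nat_card (n : ℕ) (σ : Equiv.Perm (Fin n)) :
    Nat.card {i : ℕ // ∃ h1 : i + 1 < n,
      σ ⟨i, Nat.lt_of_succ_lt h1⟩ < σ ⟨i + 1, h1⟩} = (ascSet n σ).card := by
  classical
  rw [← Nat.card_eq_finsetCard]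
  apply Nat.card_congr
  apply Equiv.subtypeEquivRight
  intro i
  simp only [ascSet, mem_filter, mem_range, Finset.mem_coe]
  constructor
  · rintro ⟨h1, h2⟩; exact ⟨by omega, h1, h2⟩
  · rintro ⟨-, h1, h2⟩; exact ⟨h1, h2⟩

lemma eulerianNumber_eq (n r : ℕ) :
    eulerianNumber n r = Nat.card {σ : Equiv.Perm (Fin n) // (ascSet n σ).card = r} := by
  unfold eulerianNumber
  exact Nat.card_congr (Equiv.subtypeEquivRight fun σ => by rw [asc_nat_card])

lemma mem_ascSet {m : ℕ} (σ : Equiv.Perm (Fin (m + 1))) {i : ℕ} (hi : i < m) :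
    i ∈ ascSet (m + 1) σ ↔ σ ⟨i, by omega⟩ < σ ⟨i + 1, by omega⟩ := by
  classical
  simp only [ascSet, mem_filter, mem_range, Nat.add_sub_cancel]
  constructor
  · rintro ⟨-, h1, h2⟩; exact h2
  · intro h; exact ⟨hi, by omega, h⟩

lemma mem_ascSet' {m : ℕ} (σ : Equiv.Perm (Fin (m + 1))) {i : ℕ} (hi : i < m)
    {x y : Fin (m + 1)} (hx : (x : ℕ) = i) (hy : (y : ℕ) = i + 1) :
    i ∈ ascSet (m + 1) σ ↔ σ x < σ y := by
  have hx' : x = ⟨i, Nat.lt_succ_of_lt hi⟩ := Fin.ext hx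
  have hy' : y = ⟨i + 1, Nat.succ_lt_succ hi⟩ := Fin.ext hy
  rw [hx', hy']
  exact mem_ascSet σ hi

lemma rev_apply' {m : ℕ} (σ : Equiv.Perm (Fin (m + 1))) (x y : Fin (m + 1))
    (h : (y : ℕ) = m - (x : ℕ)) : (Fin.revPerm.trans σ) x = σ y := by
  have : y = x.rev := by
    ext
    simp [Fin.val_rev]
    omega
  simp [Equiv.trans_apply, this]

lemma mem_ascSet_rev {m : ℕ} (σ : Equiv.Perm (Fin (m + 1))) {i : ℕ} (hi : i < m)
    {x y : Fin (m + 1)} (hx : (x : ℕ) = m - i) (hy : (y : ℕ) = m - i - 1) :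
    i ∈ ascSet (m + 1) (Fin.revPerm.trans σ) ↔ σ x < σ y := by
  rw [mem_ascSet' (Fin.revPerm.trans σ) hi (x := ⟨i, by omega⟩) (y := ⟨i + 1, by omega⟩) rfl rfl,
    rev_apply' σ ⟨i, by omega⟩ x (by simpa using hx),
    rev_apply' σ ⟨i + 1, by omega⟩ y (by simp [hy]; omega)]

lemma asc_rev (m : ℕ) (σ : Equiv.Perm (Fin (m + 1))) :
    (ascSet (m + 1) (Fin.revPerm.trans σ)).card = m - (ascSet (m + 1) σ).card := by
  classical
  have hsub : ∀ τ : Equiv.Perm (Fin (m + 1)), ascSet (m + 1) τ ⊆ range m := by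
    intro τ i hi
    have := (mem_filter.mp hi).1
    simpa using this
  have key : (ascSet (m + 1) (Fin.revPerm.trans σ)).card
      = ((range m) \ ascSet (m + 1) σ).card := by
    apply Finset.card_bij (fun i _ => m - 1 - i)
    · intro a ha
      have ham : a < m := by simpa using hsub _ ha
      have hasc := (mem_ascSet_rev σ ham
        (x := ⟨m - a, by omega⟩) (y := ⟨m - a - 1, by omega⟩) rfl rfl).mp ha
      simp only [mem_sdiff, mem_range]
      refine ⟨by omega, ?_⟩
      intro hmem
      have h2 := (mem_ascSet' σ (show m - 1 - a < m by omega)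
        (x := ⟨m - a - 1, by omega⟩) (y := ⟨m - a, by omega⟩) (by simp; omega) (by simp; omega)).mp hmem
      exact absurd h2 (lt_asymm hasc)
    · intro a ha b hb hab
      have ha' : a < m := by simpa using hsub _ ha
      have hb' : b < m := by simpa using hsub _ hb
      omega
    · intro j hj
      obtain ⟨hjm, hjnot⟩ := mem_sdiff.mp hj
      have hjlt : j < m := mem_range.mp hjm
      refine ⟨m - 1 - j, ?_, by omega⟩
      rw [mem_ascSet_rev σ (show m - 1 - j < m by omega)
        (x := ⟨j + 1, by omega⟩) (y := ⟨j, by omega⟩) (by simp; omega) (by simp; omega)]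
      have hne : σ ⟨j + 1, by omega⟩ ≠ σ ⟨j, by omega⟩ := by
        intro h
        have := σ.injective h
        simp only [Fin.mk.injEq] at this
        omega
      have hnotlt : ¬ σ ⟨j, by omega⟩ < σ ⟨j + 1, by omega⟩ :=
        fun h => hjnot ((mem_ascSet σ hjlt).mpr h)
      exact lt_of_le_of_ne (le_of_not_gt hnotlt) hne
  rw [key, card_sdiff_of_subset (hsub σ), card_range]

lemma ascSet_card_le (m : ℕ) (σ : Equiv.Perm (Fin (m + 1))) :
    (ascSet (m + 1) σ).card ≤ m := by
  classical
  calc (ascSet (m + 1) σ).card ≤ (range ((m + 1) - 1)).card := card_le_card (filter_subset _ _)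
  _ = m := by simp

lemma euler_symm (k r : ℕ) (hr : r ≤ 2 * k) :
    eulerianNumber (2 * k + 1) (2 * k - r) = eulerianNumber (2 * k + 1) r := by
  rw [eulerianNumber_eq, eulerianNumber_eq]
  apply Nat.card_congr
  have hF : ∀ σ : Equiv.Perm (Fin (2 * k + 1)),
      Fin.revPerm.trans (Fin.revPerm.trans σ) = σ := by
    intro σ; ext x; simp [Equiv.trans_apply]
  refine ⟨fun p => ⟨Fin.revPerm.trans p.1, ?_⟩, fun p => ⟨Fin.revPerm.trans p.1, ?_⟩, ?_, ?_⟩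
  · have h1 := asc_rev (2 * k) p.1
    have h2 := p.2
    have h3 := ascSet_card_le (2 * k) p.1
    omega
  · have h1 := asc_rev (2 * k) p.1
    have h2 := p.2
    omega
  · intro p; exact Subtype.ext (hF p.1)
  · intro p; exact Subtype.ext (hF p.1)

lemma neg_prod (n : ℕ) (g : ℕ → ℤ) :
    ∏ x ∈ Finset.range n, -g x = (-1) ^ n * ∏ x ∈ Finset.range n, g x := by
  induction n with
  | zero => simp
  | succ n ih => rw [Finset.prod_range_succ, Finset.prod_range_succ, ih]; ring

lemma prod_reflect (b : ℤ) (k r : ℕ) (hr : r ≤ 2 * k) :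
    ∏ i ∈ Finset.range (2 * k + 1), ((b - 1) * k + 2 * k - b * ((2 * k - r : ℕ) : ℤ) - i)
      = - ∏ i ∈ Finset.range (2 * k + 1), ((b - 1) * k + 2 * k - b * r - i) := by
  have step : ∀ i ∈ Finset.range (2 * k + 1),
      ((b - 1) * k + 2 * k - b * ((2 * k - r : ℕ) : ℤ) - (i : ℤ))
        = -((b - 1) * k + 2 * k - b * r - ((2 * k - i : ℕ) : ℤ)) := by
    intro i hi
    have hi' : i ≤ 2 * k := by
      have := mem_range.mp hi; omega
    rw [Nat.cast_sub hr, Nat.cast_sub hi']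
    push_cast
    ring
  rw [Finset.prod_congr rfl step]
  rw [neg_prod (2 * k + 1) (fun x => (b - 1) * k + 2 * k - b * r - ((2 * k - x : ℕ) : ℤ))]
  have hrefl : ∏ i ∈ Finset.range (2 * k + 1),
      ((b - 1) * k + 2 * k - b * r - ((2 * k - i : ℕ) : ℤ))
      = ∏ i ∈ Finset.range (2 * k + 1), ((b - 1) * k + 2 * k - b * r - (i : ℤ)) := by
    simpa using Finset.prod_range_reflect
      (fun i : ℕ => ((b - 1) * k + 2 * k - b * r - (i : ℤ))) (2 * k + 1)
  rw [hrefl, Odd.neg_one_pow ⟨k, by ring⟩, neg_one_mul]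

/-- **Integral zero of the odd-order counting polynomials.**  For integers `b ≥ 2` and `k ≥ 0`,
with `n = 2k + 1`:
`∑_{r=0}^{n−1} A(n, r+1) ∏_{i=0}^{n−1} ((b−1)k + n − 1 − b r − i) = 0` in `ℤ`; that is, the
degree-`n` polynomial `∑_r A(n, r+1) C(M + n − 1 − b r, n)` (with `C` the generalized binomial
coefficient) has the integral zero `M = (b − 1)k`. -/
theorem odd_order_integral_zero (b : ℤ) (hb : 2 ≤ b) (k : ℕ) :
    ∑ r ∈ Finset.range (2 * k + 1),
      (eulerianNumber (2 * k + 1) r : ℤ) *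
        ∏ i ∈ Finset.range (2 * k + 1),
          ((b - 1) * k + 2 * k - b * r - i) = 0 := by
  have hzero : ∀ r ∈ Finset.range (2 * k + 1),
      (eulerianNumber (2 * k + 1) r : ℤ) *
          (∏ i ∈ Finset.range (2 * k + 1), ((b - 1) * k + 2 * k - b * r - i))
        + (eulerianNumber (2 * k + 1) (2 * k - r) : ℤ) *
          (∏ i ∈ Finset.range (2 * k + 1), ((b - 1) * k + 2 * k - b * ((2 * k - r : ℕ) : ℤ) - i))
        = 0 := by
    intro r hr
    have hr' : r ≤ 2 * k := by have := mem_range.mp hr; omega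
    rw [euler_symm k r hr', prod_reflect b k r hr']
    ring
  apply Finset.sum_involution (fun r _ => 2 * k - r)
  · intro r hr; exact hzero r hr
  · intro r hr hne heq
    apply hne
    have h0 := hzero r hr
    rw [heq] at h0
    linarith
  · intro r hr; simp only [mem_range]; omega
  · intro r hr
    have hr' : r ≤ 2 * k := by have := mem_range.mp hr; omega
    omega
end
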